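/- Let p : ℝ → ℝ be a continuous nonnegative function that is integrable with ∫_ℝ p(x) dx = 1, and suppose p is real analytic at every point of the open set {x ∈ ℝ : p(x) > 0}. Then p is unimodal if and only if for every c > 0 the level set {x ∈ ℝ : p(x) = c} contains at most two points (i.e., for all x₁, x₂, x₃ with p(x₁) = p(x₂) = p(x₃) = c, at least two of x₁, x₂, x₃ are equal). -/
import Mathlib

open MeasureTheory Real Set Filter Topology

/-- A function `f : ℝ → ℝ` is unimodal if there is a mode `a` such that `f` is
nondecreasing on `(-∞, a]` and nonincreasing on `[a, ∞)`. -/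
def Unimodal (f : ℝ → ℝ) : Prop :=
  ∃ a : ℝ, MonotoneOn f (Set.Iic a) ∧ AntitoneOn f (Set.Ici a)

/-- An integrable function can't be `≥ c > 0` on a set of infinite measure; specialized. -/
lemma aux_not_ge_on_infinite (p : ℝ → ℝ) (hint : Integrable p) {c : ℝ} (hc0 : 0 < c)
    (s : Set ℝ) (hs : volume s = ⊤) (h : ∀ x ∈ s, c ≤ p x) : False := by
  have h1 : volume {x | c ≤ p x} < ⊤ := hint.measure_ge_lt_top hc0
  have h2 : s ⊆ {x | c ≤ p x} := fun x hx => h x hx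
  have := measure_mono (μ := volume) h2
  rw [hs] at this
  exact (not_le.2 h1) this

/-- No positive plateau: `p` cannot be constant `= c > 0` on a nontrivial interval. -/
lemma aux_no_plateau (p : ℝ → ℝ) (hc : Continuous p)
    (hint : Integrable p) (han : ∀ x, 0 < p x → AnalyticAt ℝ p x)
    {c u v : ℝ} (hc0 : 0 < c) (huv : u < v) (hplat : ∀ s ∈ Icc u v, p s = c) : False := by
  set S : Set ℝ := {t | v ≤ t ∧ ∀ s ∈ Icc u t, p s = c} with hS
  have hvS : v ∈ S := ⟨le_refl v, hplat⟩
  by_cases hbdd : BddAbove S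
  · set T := sSup S with hT
    have hvT : v ≤ T := le_csSup hbdd hvS
    have huT : u < T := lt_of_lt_of_le huv hvT
    -- p = c on Ico u T
    have hIco : ∀ s ∈ Ico u T, p s = c := by
      intro s hs
      obtain ⟨t, htS, hst⟩ : ∃ t ∈ S, s < t := by
        by_contra hcon
        push_neg at hcon
        exact absurd (csSup_le ⟨v, hvS⟩ hcon) (not_le.2 hs.2)
      exact htS.2 s ⟨hs.1, hst.le⟩
    have hIcc : ∀ s ∈ Icc u T, p s = c := by
      have hcl : Set.EqOn p (fun _ => c) (closure (Ico u T)) :=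
        Set.EqOn.closure (fun s hs => hIco s hs) hc continuous_const
      rw [closure_Ico huT.ne] at hcl
      exact fun s hs => hcl hs
    have hpT : p T = c := hIcc T ⟨huT.le, le_refl T⟩
    have hanT : AnalyticAt ℝ p T := han T (hpT ▸ hc0)
    have hfreq : ∃ᶠ z in 𝓝[≠] T, p z = (fun _ => c) z := by
      have h1 : ∀ᶠ z in 𝓝[<] T, p z = c := by
        filter_upwards [Ioo_mem_nhdsLT huT] with z hz
        exact hIco z ⟨hz.1.le, hz.2⟩
      exact (h1.frequently).filter_mono
        (nhdsWithin_mono T (fun z hz => ne_of_lt hz))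
    have hev : ∀ᶠ z in 𝓝 T, p z = c :=
      (hanT.frequently_eq_iff_eventually_eq analyticAt_const).1 hfreq
    rw [Metric.eventually_nhds_iff] at hev
    obtain ⟨ε, hε, hball⟩ := hev
    have hmem : T + ε / 2 ∈ S := by
      refine ⟨hvT.trans (by linarith), fun s hs => ?_⟩
      rcases le_or_gt s T with h | h
      · exact hIcc s ⟨hs.1, h⟩
      · apply hball
        rw [Real.dist_eq, abs_of_pos (by linarith)]
        have := hs.2
        linarith
    have : T + ε / 2 ≤ T := le_csSup hbdd hmem
    linarith
  · -- S unbounded: p = c on [u, ∞)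
    refine aux_not_ge_on_infinite p hint hc0 (Ici u) (by simp [Real.volume_Ici]) ?_
    intro x hx
    obtain ⟨t, htS, hxt⟩ : ∃ t ∈ S, x ≤ t := by
      by_contra hcon
      push_neg at hcon
      exact hbdd ⟨x, fun t ht => (hcon t ht).le⟩
    exact (htS.2 x ⟨hx, hxt⟩).ge

/-- Two distinct points on the same side of the mode with equal positive value: impossible. -/
lemma aux_same_side (p : ℝ → ℝ) (hc : Continuous p)
    (hint : Integrable p) (han : ∀ x, 0 < p x → AnalyticAt ℝ p x)
    {a : ℝ} (hmono : MonotoneOn p (Set.Iic a)) (hanti : AntitoneOn p (Set.Ici a))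
    {c : ℝ} (hc0 : 0 < c) {u v : ℝ} (huv : u < v)
    (hside : v ≤ a ∨ a ≤ u) (hu : p u = c) (hv : p v = c) : False := by
  apply aux_no_plateau p hc hint han hc0 huv
  intro s hs
  rcases hside with h | h
  · have hsa : s ≤ a := hs.2.trans h
    have hua : u ≤ a := hs.1.trans hsa
    have h1 : p u ≤ p s := hmono hua hsa hs.1
    have h2 : p s ≤ p v := hmono hsa h hs.2
    linarith [hu ▸ h1, hv ▸ h2]
  · have has : a ≤ s := h.trans hs.1
    have hav : a ≤ v := has.trans hs.2
    have h1 : p s ≤ p u := hanti h has hs.1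
    have h2 : p v ≤ p s := hanti has hav hs.2
    linarith [hu ▸ h1, hv ▸ h2]

theorem unimodal_iff_level_sets_atMost_two
    (p : ℝ → ℝ) (hc : Continuous p) (hnn : ∀ x, 0 ≤ p x)
    (hint : Integrable p) (hnorm : ∫ x, p x = 1)
    (han : ∀ x, 0 < p x → AnalyticAt ℝ p x) :
    Unimodal p ↔ ∀ c : ℝ, 0 < c → ∀ x₁ x₂ x₃ : ℝ,
      p x₁ = c → p x₂ = c → p x₃ = c → x₁ = x₂ ∨ x₁ = x₃ ∨ x₂ = x₃ := by
  constructor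
  · rintro ⟨a, hmono, hanti⟩ c hc0 x₁ x₂ x₃ h1 h2 h3
    by_contra hcon
    push_neg at hcon
    obtain ⟨h12, h13, h23⟩ := hcon
    -- helper to kill a same-side pair
    have kill : ∀ u v : ℝ, u ≠ v → p u = c → p v = c →
        ((u ≤ a ∧ v ≤ a) ∨ (a ≤ u ∧ a ≤ v)) → False := by
      intro u v huv hu hv hside
      rcases huv.lt_or_gt with hlt | hlt
      · exact aux_same_side p hc hint han hmono hanti hc0 hlt
          (hside.imp (fun h => h.2) (fun h => h.1)) hu hv
      · exact aux_same_side p hc hint han hmono hanti hc0 hlt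
          (hside.imp (fun h => h.1) (fun h => h.2)) hv hu
    rcases le_total x₁ a with ha1 | ha1 <;> rcases le_total x₂ a with ha2 | ha2 <;>
      rcases le_total x₃ a with ha3 | ha3
    · exact kill x₁ x₂ h12 h1 h2 (Or.inl ⟨ha1, ha2⟩)
    · exact kill x₁ x₂ h12 h1 h2 (Or.inl ⟨ha1, ha2⟩)
    · exact kill x₁ x₃ h13 h1 h3 (Or.inl ⟨ha1, ha3⟩)
    · exact kill x₂ x₃ h23 h2 h3 (Or.inr ⟨ha2, ha3⟩)
    · exact kill x₂ x₃ h23 h2 h3 (Or.inl ⟨ha2, ha3⟩)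
    · exact kill x₁ x₃ h13 h1 h3 (Or.inr ⟨ha1, ha3⟩)
    · exact kill x₁ x₂ h12 h1 h2 (Or.inr ⟨ha1, ha2⟩)
    · exact kill x₁ x₂ h12 h1 h2 (Or.inr ⟨ha1, ha2⟩)
  · intro H
    -- Step 1: no dip
    have nodip : ∀ x y z : ℝ, x < y → y < z → min (p x) (p z) ≤ p y := by
      intro x y z hxy hyz
      by_contra hcon
      push_neg at hcon
      set c : ℝ := (p y + min (p x) (p z)) / 2 with hcdef
      have hyc : p y < c := by
        have := hcon
        simp only [hcdef]
        linarith
      have hcx : c < p x := by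
        have h1 : min (p x) (p z) ≤ p x := min_le_left _ _
        simp only [hcdef]; cases' le_total (p x) (p z) with h h <;>
          simp [min_eq_left, min_eq_right, h] at hcon ⊢ <;> linarith
      have hcz : c < p z := by
        simp only [hcdef]; cases' le_total (p x) (p z) with h h <;>
          simp [min_eq_left, min_eq_right, h] at hcon ⊢ <;> linarith
      have hc0 : 0 < c := lt_of_le_of_lt (hnn y) hyc
      -- point to the far left with small value
      obtain ⟨w, hwx, hw⟩ : ∃ w, w < x ∧ p w < c := by
        by_contra hcon2
        push_neg at hcon2
        exact aux_not_ge_on_infinite p hint hc0 (Iio x) (by simp [Real.volume_Iio])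
          (fun t ht => hcon2 t ht)
      obtain ⟨a₀, ha₀, hpa₀⟩ : ∃ t ∈ Ioo w x, p t = c := by
        have := intermediate_value_Ioo hwx.le hc.continuousOn (a := w) (b := x)
        obtain ⟨t, ht, hpt⟩ := this ⟨hw, hcx⟩
        exact ⟨t, ht, hpt⟩
      obtain ⟨a₁, ha₁, hpa₁⟩ : ∃ t ∈ Ioo x y, p t = c := by
        have := intermediate_value_Ioo' hxy.le hc.continuousOn (a := x) (b := y)
        obtain ⟨t, ht, hpt⟩ := this ⟨hyc, hcx⟩
        exact ⟨t, ht, hpt⟩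
      obtain ⟨a₂, ha₂, hpa₂⟩ : ∃ t ∈ Ioo y z, p t = c := by
        have := intermediate_value_Ioo hyz.le hc.continuousOn (a := y) (b := z)
        obtain ⟨t, ht, hpt⟩ := this ⟨hyc, hcz⟩
        exact ⟨t, ht, hpt⟩
      have h01 : a₀ < a₁ := ha₀.2.trans ha₁.1
      have h12' : a₁ < a₂ := ha₁.2.trans ha₂.1
      rcases H c hc0 a₀ a₁ a₂ hpa₀ hpa₁ hpa₂ with h | h | h
      · exact absurd h h01.ne
      · exact absurd h (h01.trans h12').ne
      · exact absurd h h12'.ne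
    -- Step 2: find a point with positive value
    obtain ⟨x₀, hx₀⟩ : ∃ x, 0 < p x := by
      by_contra hcon
      push_neg at hcon
      have : ∀ x, p x = 0 := fun x => le_antisymm (hcon x) (hnn x)
      rw [show p = (fun _ => (0:ℝ)) from funext this] at hnorm
      simp at hnorm
    -- Step 3: points left and right with smaller value
    obtain ⟨w₁, hw₁x, hw₁⟩ : ∃ w, w < x₀ ∧ p w < p x₀ := by
      by_contra hcon
      push_neg at hcon
      exact aux_not_ge_on_infinite p hint hx₀ (Iio x₀) (by simp [Real.volume_Iio])
        (fun t ht => hcon t ht)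
    obtain ⟨w₂, hxw₂, hw₂⟩ : ∃ w, x₀ < w ∧ p w < p x₀ := by
      by_contra hcon
      push_neg at hcon
      exact aux_not_ge_on_infinite p hint hx₀ (Ioi x₀) (by simp [Real.volume_Ioi])
        (fun t ht => hcon t ht)
    -- Step 4: maximizer on the compact interval
    obtain ⟨a, haI, hamax⟩ := isCompact_Icc.exists_isMaxOn (s := Icc w₁ w₂)
      (nonempty_Icc.2 (hw₁x.trans hxw₂).le) hc.continuousOn
    have hmax : ∀ x, p x ≤ p a := by
      intro x
      rcases le_or_gt x w₁ with h | h
      · rcases eq_or_lt_of_le h with rfl | h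
        · exact hamax ⟨le_refl x, (hw₁x.trans hxw₂).le⟩
        · have hmin := nodip x w₁ x₀ h hw₁x
          have hxle : p x ≤ p w₁ := by
            rcases le_total (p x) (p x₀) with h' | h'
            · rw [min_eq_left h'] at hmin; exact hmin
            · rw [min_eq_right h'] at hmin; linarith
          exact hxle.trans (hamax ⟨le_refl w₁, (hw₁x.trans hxw₂).le⟩)
      rcases le_or_gt x w₂ with h2 | h2
      · exact hamax ⟨h.le, h2⟩
      · have hmin := nodip x₀ w₂ x hxw₂ h2
        have hxle : p x ≤ p w₂ := by
          rcases le_total (p x) (p x₀) with h' | h'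
          · rw [min_eq_right h'] at hmin; exact hmin
          · rw [min_eq_left h'] at hmin; linarith
        exact hxle.trans (hamax ⟨(hw₁x.trans hxw₂).le, le_refl w₂⟩)
    refine ⟨a, ?_, ?_⟩
    · intro x hx y hy hxy
      rcases eq_or_lt_of_le hxy with rfl | hlt
      · exact le_refl _
      rcases eq_or_lt_of_le (show y ≤ a from hy) with rfl | hya
      · exact hmax x
      · have hmin := nodip x y a hlt hya
        rcases le_total (p x) (p a) with h' | h'
        · rw [min_eq_left h'] at hmin; exact hmin
        · rw [min_eq_right h'] at hmin; linarith [hmax x]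
    · intro x hx y hy hxy
      rcases eq_or_lt_of_le hxy with rfl | hlt
      · exact le_refl _
      rcases eq_or_lt_of_le (show a ≤ x from hx) with rfl | hax
      · exact hmax y
      · have hmin := nodip a x y hax hlt
        rcases le_total (p a) (p y) with h' | h'
        · rw [min_eq_left h'] at hmin; linarith [hmax y]
        · rw [min_eq_right h'] at hmin; exact hmin
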